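/- Let q, n ≥ 1, with f and g as defined (f : {x,y}* → ZMod q counting y's after the (n+1)-st occurrence of x from the right, g(i₁,…,iₙ) = x y^{i₁} ⋯ x y^{iₙ}). For κ = (i₁,…,iₙ) ∈ (Fin q)^n, any k ∈ {1,…,n}, and any r ∈ {0,…,q−1}, one has f(g(κ) ++ x^k y^r) ≡ iₖ + i_{k+1} + ⋯ + iₙ + r (mod q). -/
import Mathlib


/-- The two-letter alphabet `{x, y}`. -/
inductive XY : Type
  | x : XY
  | y : XY
deriving DecidableEq

/-- The longest suffix of `w` containing at most `n` occurrences of `x`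
(equivalently, the part of `w` strictly after the `(n+1)`-st occurrence of `x`
from the right, or `w` itself if `w` has at most `n` occurrences of `x`). -/
def goodSuffix (n : ℕ) : List XY → List XY
  | [] => []
  | a :: w => if (a :: w).count XY.x ≤ n then a :: w else goodSuffix n w

/-- `f w` is the number of `y`'s in `w` after the `(n+1)`-st occurrence of `x`
from the right (all `y`'s if there are at most `n` occurrences of `x`), mod `q`. -/
def f (q n : ℕ) (w : List XY) : ZMod q := ((goodSuffix n w).count XY.y : ZMod q)

/-- `g (i₁, …, iₙ) = x y^{i₁} x y^{i₂} ⋯ x y^{iₙ}`. -/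
def g (q n : ℕ) (κ : Fin n → Fin q) : List XY :=
  (List.ofFn fun j : Fin n => XY.x :: List.replicate (κ j : ℕ) XY.y).flatten


lemma count_x_replicate_y (m : ℕ) : (List.replicate m XY.y).count XY.x = 0 := by
  rw [List.count_replicate, if_neg (by decide)]

lemma count_y_replicate_x (m : ℕ) : (List.replicate m XY.x).count XY.y = 0 := by
  rw [List.count_replicate, if_neg (by decide)]

lemma goodSuffix_of_le (n : ℕ) (v : List XY) (h : v.count XY.x ≤ n) :
    goodSuffix n v = v := by
  cases v with
  | nil => rfl
  | cons a w => simp [goodSuffix, h]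

lemma goodSuffix_append_of_lt (n : ℕ) (u v : List XY) (h : n < v.count XY.x) :
    goodSuffix n (u ++ v) = goodSuffix n v := by
  induction u with
  | nil => rfl
  | cons a u ih =>
    have hc : ¬ ((a :: (u ++ v)).count XY.x ≤ n) := by
      have : v.count XY.x ≤ (a :: (u ++ v)).count XY.x := by
        simp [List.count_cons, List.count_append]; omega
      omega
    rw [List.cons_append, goodSuffix, if_neg hc, ih]

lemma count_x_blocks (n q : ℕ) (κ : Fin n → Fin q) (l : List (Fin n)) :
    ((l.map fun j => XY.x :: List.replicate (κ j : ℕ) XY.y).flatten).count XY.x = l.length := by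
  induction l with
  | nil => rfl
  | cons a l ih => simp [List.count_cons, List.count_replicate, ih]

lemma count_y_blocks (n q : ℕ) (κ : Fin n → Fin q) (l : List (Fin n)) :
    ((l.map fun j => XY.x :: List.replicate (κ j : ℕ) XY.y).flatten).count XY.y
      = (l.map fun j => (κ j : ℕ)).sum := by
  induction l with
  | nil => rfl
  | cons a l ih => simp [List.count_cons, List.count_replicate, ih]

lemma sum_drop_finRange {M : Type*} [AddCommMonoid M] (n : ℕ) (a : Fin n → M) :
    ∀ d m, n - m = d →
      (((List.finRange n).drop m).map a).sum
        = ∑ j ∈ Finset.univ.filter (fun j : Fin n => m ≤ (j : ℕ)), a j := by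
  intro d
  induction d with
  | zero =>
    intro m hm
    rw [List.drop_eq_nil_of_le (by simp; omega)]
    rw [Finset.filter_false_of_mem (fun j _ => by omega)]
    simp
  | succ d ih =>
    intro m hm
    have hmn : m < n := by omega
    have h1 : m < (List.finRange n).length := by simpa using hmn
    rw [List.drop_eq_getElem_cons h1, List.getElem_finRange]
    have h2 : Finset.univ.filter (fun j : Fin n => m ≤ (j : ℕ))
        = insert (Fin.cast (by simp) (⟨m, h1⟩ : Fin (List.finRange n).length))
            (Finset.univ.filter (fun j : Fin n => m + 1 ≤ (j : ℕ))) := by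
      ext j
      simp only [Finset.mem_filter, Finset.mem_insert, Finset.mem_univ, true_and]
      constructor
      · intro hj
        rcases Nat.eq_or_lt_of_le hj with h | h
        · left; apply Fin.ext; simp [h.symm]
        · right; omega
      · rintro (rfl | hj)
        · simp
        · omega
    rw [h2, Finset.sum_insert (by simp)]
    simp only [List.map_cons, List.sum_cons]
    rw [ih (m + 1) (by omega)]


/-- `f (g κ ++ xᵏ yʳ) ≡ i_k + i_{k+1} + ⋯ + i_n + r (mod q)`, where `k` ranges
over `{1, …, n}` (here represented by `k : Fin n`, the `x`-block having length
`k + 1`) and `r ∈ {0, …, q-1}`. -/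
theorem f_g_append_pump (q n : ℕ) (hq : 1 ≤ q) (hn : 1 ≤ n)
    (κ : Fin n → Fin q) (k : Fin n) (r : Fin q) :
    f q n (g q n κ ++ List.replicate ((k : ℕ) + 1) XY.x ++ List.replicate (r : ℕ) XY.y) =
      (∑ j ∈ Finset.Ici k, ((κ j : ℕ) : ZMod q)) + ((r : ℕ) : ZMod q) := by
  set B : Fin n → List XY := fun j => XY.x :: List.replicate (κ j : ℕ) XY.y with hB
  have hk : (k : ℕ) < (List.finRange n).length := by simp
  have hsplit : List.finRange n
      = (List.finRange n).take (k : ℕ) ++ (List.finRange n).drop (k : ℕ) :=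
    (List.take_append_drop _ _).symm
  have hdrop : (List.finRange n).drop (k : ℕ)
      = k :: (List.finRange n).drop ((k : ℕ) + 1) := by
    rw [List.drop_eq_getElem_cons hk, List.getElem_finRange]
    rfl
  -- the word rewritten
  set T := ((List.finRange n).drop ((k : ℕ) + 1)).map B with hT
  have hTlen : ((List.finRange n).drop ((k : ℕ) + 1)).length = n - ((k : ℕ) + 1) := by simp
  set v' : List XY := List.replicate (κ k : ℕ) XY.y ++
      (T.flatten ++ (List.replicate ((k : ℕ) + 1) XY.x ++ List.replicate (r : ℕ) XY.y)) with hv'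
  have hw : g q n κ ++ List.replicate ((k : ℕ) + 1) XY.x ++ List.replicate (r : ℕ) XY.y
      = (((List.finRange n).take (k : ℕ)).map B).flatten ++ (XY.x :: v') := by
    rw [g, List.ofFn_eq_map]
    conv_lhs => rw [hsplit]
    rw [hdrop]
    simp [v', B, T]
  have hkn : (k : ℕ) < n := k.isLt
  have hcx : v'.count XY.x = n := by
    have h1 : T.flatten.count XY.x = n - ((k : ℕ) + 1) := by
      rw [hT, count_x_blocks n q κ, hTlen]
    simp only [hv', List.count_append, count_x_replicate_y,
      List.count_replicate_self, h1]
    omega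
  have hcx' : (XY.x :: v').count XY.x = n + 1 := by
    rw [List.count_cons, hcx, if_pos (by decide)]
  have hgs : goodSuffix n (g q n κ ++ List.replicate ((k : ℕ) + 1) XY.x
      ++ List.replicate (r : ℕ) XY.y) = v' := by
    rw [hw, goodSuffix_append_of_lt n _ _ (by rw [hcx']; omega)]
    rw [goodSuffix, if_neg (by rw [hcx']; omega)]
    exact goodSuffix_of_le n v' hcx.le
  have hcy : v'.count XY.y = (κ k : ℕ)
      + ((((List.finRange n).drop ((k : ℕ) + 1)).map fun j => (κ j : ℕ)).sum + (r : ℕ)) := by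
    have h1 : T.flatten.count XY.y
        = (((List.finRange n).drop ((k : ℕ) + 1)).map fun j => (κ j : ℕ)).sum := by
      rw [hT, count_y_blocks]
    simp only [hv', List.count_append, count_y_replicate_x,
      List.count_replicate_self, h1]
    omega
  have hIci : Finset.Ici k = Finset.univ.filter (fun j : Fin n => (k : ℕ) ≤ (j : ℕ)) := by
    ext j
    simp only [Finset.mem_Ici, Finset.mem_filter, Finset.mem_univ, true_and]
    exact Fin.le_def
  rw [f, hgs, hcy, Nat.cast_add, Nat.cast_add, Nat.cast_list_sum, List.map_map]
  rw [hIci, ← sum_drop_finRange n (fun j => ((κ j : ℕ) : ZMod q)) (n - (k : ℕ)) (k : ℕ) rfl]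
  rw [hdrop]
  simp only [List.map_cons, List.sum_cons]
  have hcomp : (Nat.cast ∘ fun j : Fin n => (κ j : ℕ))
      = fun j : Fin n => ((κ j : ℕ) : ZMod q) := rfl
  rw [hcomp]
  ring
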